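/- Let F = (f, g, h) be a GSWF on three alternatives with n voters satisfying the IIA condition, and suppose E[f] ≤ 2^{−500000}, E[g] ≤ 1/2, and E[h] ≤ 1/2. Then the probability of a non-transitive outcome satisfies P(F) > 1/10. -/

import Mathlib

open Finset

noncomputable section

/-- The discrete cube `{0,1}^n`. -/
abbrev Cube (n : ℕ) := Fin n → Bool

/-- Inner product of real-valued functions on the cube w.r.t. the uniform measure. -/
def cInner (n : ℕ) (f g : Cube n → ℝ) : ℝ :=
  (∑ x : Cube n, f x * g x) / 2 ^ n

/-- Expectation w.r.t. the uniform measure on the cube. -/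
def cExp (n : ℕ) (f : Cube n → ℝ) : ℝ :=
  (∑ x : Cube n, f x) / 2 ^ n

/-- The Walsh character `r_S`. -/
def walsh (n : ℕ) (S : Finset (Fin n)) : Cube n → ℝ :=
  fun x => ∏ i ∈ S, (2 * (if x i then (1 : ℝ) else 0) - 1)

/-- Fourier–Walsh coefficient of `f` at `S`. -/
def fcoef (n : ℕ) (f : Cube n → ℝ) (S : Finset (Fin n)) : ℝ :=
  cInner n f (walsh n S)

/-- Real-valued version of a Boolean function. -/
def BR (n : ℕ) (f : Cube n → Bool) : Cube n → ℝ :=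
  fun x => if f x then 1 else 0

/-- A triple `(x,y,z)` of preference vectors comes from a profile of linear orders
on three alternatives iff no coordinate is cyclic, i.e. `¬(x k = y k = z k)` for all `k`. -/
def Profile3Ok (n : ℕ) (x y z : Cube n) : Prop :=
  ∀ k, ¬ (x k = y k ∧ y k = z k)

/-- Probability of a non-transitive outcome for the IIA GSWF on three alternatives
given by pairwise choice functions `f, g, h`, for a uniformly random profile. -/
def PF3 (n : ℕ) (f g h : Cube n → Bool) : ℝ :=
  (Nat.card {p : Cube n × Cube n × Cube n //
      Profile3Ok n p.1 p.2.1 p.2.2 ∧ f p.1 = g p.2.1 ∧ g p.2.1 = h p.2.2} : ℝ) / 6 ^ n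

namespace PF3Aux
variable {n : ℕ}


variable {n : ℕ}

def chi (b : Bool) : ℝ := 2 * (if b then (1 : ℝ) else 0) - 1

lemma walsh_eq (S : Finset (Fin n)) (x : Cube n) : walsh n S x = ∏ i ∈ S, chi (x i) := rfl

def cc (a b : Bool) : ℝ := if a = b then 1 else 2

lemma cc_eq (a b : Bool) : cc a b = (3/2) * ((-1/3) * (chi a * chi b) + 1) := by
  cases a <;> cases b <;> simp [cc, chi] <;> norm_num

lemma kernel_expand (y z : Cube n) :
    ∏ i, cc (y i) (z i)
      = (3/2 : ℝ)^n * ∑ S : Finset (Fin n), (-1/3 : ℝ)^S.card * (walsh n S y * walsh n S z) := by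
  have h0 : ∏ i, cc (y i) (z i)
      = ∏ i, ((3/2 : ℝ) * ((-1/3 : ℝ) * (chi (y i) * chi (z i)) + 1)) :=
    Finset.prod_congr rfl fun i _ => cc_eq _ _
  rw [h0, Finset.prod_mul_distrib, Finset.prod_const, Finset.card_univ, Fintype.card_fin,
    Finset.prod_add]
  congr 1
  rw [Finset.powerset_univ]
  refine Finset.sum_congr rfl fun S _ => ?_
  rw [Finset.prod_const_one, mul_one, Finset.prod_mul_distrib, Finset.prod_mul_distrib,
    Finset.prod_const, walsh_eq, walsh_eq]

lemma chi_mul_self (b : Bool) : chi b * chi b = 1 := by cases b <;> norm_num [chi]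

lemma sum_walsh_mul (y y' : Cube n) :
    ∑ S : Finset (Fin n), walsh n S y * walsh n S y' = if y = y' then (2:ℝ)^n else 0 := by
  have h1 : ∑ S : Finset (Fin n), walsh n S y * walsh n S y'
      = ∏ i, (chi (y i) * chi (y' i) + 1) := by
    rw [Finset.prod_add, Finset.powerset_univ]
    refine Finset.sum_congr rfl fun S _ => ?_
    rw [Finset.prod_const_one, mul_one, walsh_eq, walsh_eq, Finset.prod_mul_distrib]
  rw [h1]
  by_cases hyy : y = y'
  · subst hyy
    simp only [chi_mul_self]
    simp [Finset.prod_const]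
    norm_num
  · obtain ⟨i, hi⟩ := Function.ne_iff.mp hyy
    simp only [if_neg hyy]
    refine Finset.prod_eq_zero (Finset.mem_univ i) ?_
    revert hi
    cases y i <;> cases y' i <;> norm_num [chi]

lemma parseval (A : Finset (Cube n)) :
    ∑ S : Finset (Fin n), (∑ y ∈ A, walsh n S y)^2 = 2^n * A.card := by
  have h1 : ∀ S : Finset (Fin n), (∑ y ∈ A, walsh n S y)^2
      = ∑ y ∈ A, ∑ y' ∈ A, walsh n S y * walsh n S y' := by
    intro S; rw [sq, Finset.sum_mul_sum]
  simp_rw [h1]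
  rw [Finset.sum_comm]
  have h2 : ∀ y ∈ A, ∑ S : Finset (Fin n), ∑ y' ∈ A, walsh n S y * walsh n S y'
      = (2:ℝ)^n := by
    intro y hy
    rw [Finset.sum_comm]
    have : ∀ y' ∈ A, ∑ S : Finset (Fin n), walsh n S y * walsh n S y'
        = if y = y' then (2:ℝ)^n else 0 := fun y' _ => sum_walsh_mul y y'
    rw [Finset.sum_congr rfl this, Finset.sum_ite_eq A y (fun _ => (2:ℝ)^n), if_pos hy]
  rw [Finset.sum_congr rfl h2, Finset.sum_const, nsmul_eq_mul, mul_comm]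

lemma card_cube : (Finset.univ : Finset (Cube n)).card = 2^n := by
  simp [Fintype.card_fun]

lemma sum_walsh_zero {S : Finset (Fin n)} (hS : S ≠ ∅) :
    ∑ y : Cube n, walsh n S y = 0 := by
  have hp := parseval (Finset.univ : Finset (Cube n))
  rw [card_cube] at hp
  have hsplit : (∑ y : Cube n, walsh n (∅ : Finset (Fin n)) y)^2
      + ∑ S ∈ Finset.univ.erase (∅ : Finset (Fin n)), (∑ y : Cube n, walsh n S y)^2
      = ∑ S : Finset (Fin n), (∑ y : Cube n, walsh n S y)^2 :=
    Finset.add_sum_erase Finset.univ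
      (fun S : Finset (Fin n) => (∑ y : Cube n, walsh n S y)^2) (Finset.mem_univ (∅ : Finset (Fin n)))
  have hempty : ∑ y : Cube n, walsh n (∅ : Finset (Fin n)) y = (2:ℝ)^n := by
    simp [walsh, card_cube]
  have hzero : ∑ S ∈ Finset.univ.erase (∅ : Finset (Fin n)), (∑ y : Cube n, walsh n S y)^2 = 0 := by
    rw [hempty, hp] at hsplit
    push_cast at hsplit
    nlinarith [hsplit]
  have := (Finset.sum_eq_zero_iff_of_nonneg (fun S _ => sq_nonneg _)).mp hzero S
    (Finset.mem_erase.mpr ⟨hS, Finset.mem_univ S⟩)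
  exact pow_eq_zero_iff (two_ne_zero) |>.mp this

lemma sum_cc_row (x : Cube n) : ∑ y : Cube n, ∏ i, cc (x i) (y i) = (3:ℝ)^n := by
  simp_rw [kernel_expand]
  rw [← Finset.mul_sum, Finset.sum_comm]
  have h1 : ∑ S : Finset (Fin n), ∑ y : Cube n, (-1/3:ℝ)^S.card * (walsh n S x * walsh n S y)
      = (2:ℝ)^n := by
    rw [Finset.sum_eq_single (∅ : Finset (Fin n))]
    · simp [walsh, card_cube]
    · intro S _ hS
      simp_rw [← Finset.mul_sum]
      rw [sum_walsh_zero hS]; ring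
    · simp
  rw [h1, ← mul_pow]; norm_num


lemma key (A B : Finset (Cube n)) (hA : (2:ℝ)^n ≤ 2 * A.card) (hB : (2:ℝ)^n ≤ 2 * B.card) :
    (6:ℝ)^n / 6 ≤ ∑ y ∈ A, ∑ z ∈ B, ∏ i, cc (y i) (z i) := by
  set u : Finset (Fin n) → ℝ := fun S => ∑ y ∈ A, walsh n S y with hu
  set v : Finset (Fin n) → ℝ := fun S => ∑ z ∈ B, walsh n S z with hv
  have hrearr : ∀ (yy : Cube n), ∑ z ∈ B, ∑ S : Finset (Fin n), (-1/3 : ℝ)^S.card * (walsh n S yy * walsh n S z)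
      = ∑ S : Finset (Fin n), (-1/3 : ℝ)^S.card * (walsh n S yy * v S) := by
    intro yy
    rw [Finset.sum_comm]
    exact Finset.sum_congr rfl fun S _ => by rw [← Finset.mul_sum, ← Finset.mul_sum]
  have hexp : ∑ y ∈ A, ∑ z ∈ B, ∏ i, cc (y i) (z i)
      = (3/2 : ℝ)^n * ∑ S : Finset (Fin n), (-1/3 : ℝ)^S.card * (u S * v S) := by
    have e1 : ∑ y ∈ A, ∑ z ∈ B, ∏ i, cc (y i) (z i)
        = ∑ y ∈ A, ((3/2 : ℝ)^n
            * ∑ S : Finset (Fin n), (-1/3 : ℝ)^S.card * (walsh n S y * v S)) := by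
      refine Finset.sum_congr rfl fun y _ => ?_
      rw [show ∑ z ∈ B, ∏ i, cc (y i) (z i)
          = ∑ z ∈ B, ((3/2 : ℝ)^n * ∑ S : Finset (Fin n), (-1/3 : ℝ)^S.card * (walsh n S y * walsh n S z))
          from Finset.sum_congr rfl fun z _ => kernel_expand y z]
      rw [← Finset.mul_sum, hrearr y]
    rw [e1, ← Finset.mul_sum]
    congr 1
    rw [Finset.sum_comm]
    refine Finset.sum_congr rfl fun S _ => ?_
    rw [← Finset.mul_sum, ← Finset.sum_mul]
  have hAle : ((A.card : ℕ) : ℝ) ≤ 2^n := by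
    have h := Finset.card_le_card (Finset.subset_univ A)
    rw [card_cube] at h
    exact_mod_cast h
  have hBle : ((B.card : ℕ) : ℝ) ≤ 2^n := by
    have h := Finset.card_le_card (Finset.subset_univ B)
    rw [card_cube] at h
    exact_mod_cast h
  have hu0 : u ∅ = A.card := by simp [hu, walsh]
  have hv0 : v ∅ = B.card := by simp [hv, walsh]
  have hpA : ∑ S : Finset (Fin n), (u S)^2 = 2^n * A.card := parseval A
  have hpB : ∑ S : Finset (Fin n), (v S)^2 = 2^n * B.card := parseval B
  set E : Finset (Finset (Fin n)) := Finset.univ.erase ∅ with hE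
  have hsplitA : (u ∅)^2 + ∑ S ∈ E, (u S)^2 = ∑ S : Finset (Fin n), (u S)^2 :=
    Finset.add_sum_erase Finset.univ (fun S => (u S)^2) (Finset.mem_univ ∅)
  have hsplitB : (v ∅)^2 + ∑ S ∈ E, (v S)^2 = ∑ S : Finset (Fin n), (v S)^2 :=
    Finset.add_sum_erase Finset.univ (fun S => (v S)^2) (Finset.mem_univ ∅)
  have hEA : ∑ S ∈ E, (u S)^2 ≤ (2:ℝ)^n * 2^n / 4 := by
    have h1 : ∑ S ∈ E, (u S)^2 = 2^n * A.card - ((A.card:ℕ):ℝ)^2 := by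
      rw [← hpA, ← hsplitA, hu0]; ring
    rw [h1]; nlinarith [hAle, hA]
  have hEB : ∑ S ∈ E, (v S)^2 ≤ (2:ℝ)^n * 2^n / 4 := by
    have h1 : ∑ S ∈ E, (v S)^2 = 2^n * B.card - ((B.card:ℕ):ℝ)^2 := by
      rw [← hpB, ← hsplitB, hv0]; ring
    rw [h1]; nlinarith [hBle, hB]
  have hterm : ∀ S ∈ E, -((1/3:ℝ) * (((u S)^2 + (v S)^2)/2)) ≤ (-1/3:ℝ)^S.card * (u S * v S) := by
    intro S hS
    have hc : 1 ≤ S.card :=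
      Finset.card_pos.mpr (Finset.nonempty_iff_ne_empty.mpr (Finset.mem_erase.mp hS).1)
    have habs : |(-1/3:ℝ)^S.card| ≤ 1/3 := by
      rw [abs_pow]
      have h13 : |(-1/3:ℝ)| = 1/3 := by norm_num
      rw [h13]
      calc ((1:ℝ)/3)^S.card ≤ (1/3)^1 :=
            pow_le_pow_of_le_one (by norm_num) (by norm_num) hc
        _ = 1/3 := pow_one _
    have h2 : |u S * v S| ≤ ((u S)^2 + (v S)^2)/2 := by
      rw [abs_mul]
      nlinarith [sq_nonneg (|u S| - |v S|), sq_abs (u S), sq_abs (v S)]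
    have h3 : |(-1/3:ℝ)^S.card * (u S * v S)| ≤ (1/3) * (((u S)^2 + (v S)^2)/2) := by
      rw [abs_mul]
      exact mul_le_mul habs h2 (abs_nonneg _) (by norm_num)
    linarith [neg_abs_le ((-1/3:ℝ)^S.card * (u S * v S))]
  have hsum : -((1/3:ℝ) * (((∑ S ∈ E, (u S)^2) + ∑ S ∈ E, (v S)^2)/2))
      ≤ ∑ S ∈ E, (-1/3:ℝ)^S.card * (u S * v S) := by
    have h := Finset.sum_le_sum hterm
    have collect : ∑ S ∈ E, -((1/3:ℝ) * (((u S)^2 + (v S)^2)/2))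
        = -((1/3:ℝ) * (((∑ S ∈ E, (u S)^2) + ∑ S ∈ E, (v S)^2)/2)) := by
      have hpt : ∀ S ∈ E, -((1/3:ℝ) * (((u S)^2 + (v S)^2)/2))
          = -(1/6:ℝ) * ((u S)^2 + (v S)^2) := fun S _ => by ring
      rw [Finset.sum_congr rfl hpt, ← Finset.mul_sum, Finset.sum_add_distrib]
      ring
    linarith [h, collect.symm.le, collect.le]
  have hsplitS : ((-1/3:ℝ)^(∅ : Finset (Fin n)).card * (u ∅ * v ∅))
      + ∑ S ∈ E, (-1/3:ℝ)^S.card * (u S * v S)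
      = ∑ S : Finset (Fin n), (-1/3:ℝ)^S.card * (u S * v S) :=
    Finset.add_sum_erase Finset.univ (fun S => (-1/3:ℝ)^S.card * (u S * v S)) (Finset.mem_univ ∅)
  have h00 : ((-1/3:ℝ)^(∅ : Finset (Fin n)).card * (u ∅ * v ∅)) = (A.card : ℝ) * B.card := by
    rw [hu0, hv0]; simp
  have hab : (2:ℝ)^n * 2^n / 4 ≤ ((A.card:ℕ):ℝ) * B.card := by
    have h0a : (0:ℝ) ≤ ((A.card:ℕ):ℝ) := Nat.cast_nonneg _
    have h0b : (0:ℝ) ≤ ((B.card:ℕ):ℝ) := Nat.cast_nonneg _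
    nlinarith [hA, hB]
  have hS : (2:ℝ)^n * 2^n / 6 ≤ ∑ S : Finset (Fin n), (-1/3:ℝ)^S.card * (u S * v S) := by
    rw [← hsplitS, h00]
    linarith [hsum, hEA, hEB, hab]
  have h6 : (3/2:ℝ)^n * ((2:ℝ)^n * 2^n) = 6^n := by
    rw [← mul_pow, ← mul_pow]; norm_num
  have h32 : (0:ℝ) ≤ (3/2:ℝ)^n := by positivity
  calc (6:ℝ)^n / 6 = (3/2:ℝ)^n * ((2:ℝ)^n * 2^n / 6) := by rw [← h6]; ring
    _ ≤ (3/2:ℝ)^n * ∑ S : Finset (Fin n), (-1/3:ℝ)^S.card * (u S * v S) :=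
        mul_le_mul_of_nonneg_left hS h32
    _ = _ := hexp.symm


instance instDecP3 (x y z : Cube n) : Decidable (Profile3Ok n x y z) :=
  inferInstanceAs (Decidable (∀ k, ¬ (x k = y k ∧ y k = z k)))

lemma card_filter_forall (P : ∀ _ : Fin n, Bool → Prop) [∀ k, DecidablePred (P k)] :
    (Finset.univ.filter (fun x : Cube n => ∀ k, P k (x k))).card
      = ∏ k, (Finset.univ.filter (P k)).card := by
  rw [← Fintype.card_subtype]
  rw [Fintype.card_congr (Equiv.subtypePiEquivPi (p := P))]
  rw [Fintype.card_pi]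
  exact Finset.prod_congr rfl fun k _ => Fintype.card_subtype _

lemma cnt_x (y z : Cube n) :
    (((Finset.univ.filter (fun x : Cube n => Profile3Ok n x y z)).card : ℕ) : ℝ)
      = ∏ i, cc (y i) (z i) := by
  have h : (Finset.univ.filter (fun x : Cube n => Profile3Ok n x y z)).card
      = ∏ k, (Finset.univ.filter (fun b : Bool => ¬(b = y k ∧ y k = z k))).card :=
    card_filter_forall (fun k b => ¬(b = y k ∧ y k = z k))
  rw [h]
  push_cast
  refine Finset.prod_congr rfl fun k _ => ?_
  cases hy : y k <;> cases hz : z k <;> norm_num [cc] <;> decide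

lemma cnt_z (x y : Cube n) :
    (((Finset.univ.filter (fun z : Cube n => Profile3Ok n x y z)).card : ℕ) : ℝ)
      = ∏ i, cc (x i) (y i) := by
  have h : (Finset.univ.filter (fun z : Cube n => Profile3Ok n x y z)).card
      = ∏ k, (Finset.univ.filter (fun b : Bool => ¬(x k = y k ∧ y k = b))).card :=
    card_filter_forall (fun k b => ¬(x k = y k ∧ y k = b))
  rw [h]
  push_cast
  refine Finset.prod_congr rfl fun k _ => ?_
  cases hx : x k <;> cases hy : y k <;> norm_num [cc] <;> decide

lemma card_triple (P : Cube n → Cube n → Cube n → Prop) [∀ x y z, Decidable (P x y z)] :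
    (Finset.univ.filter (fun p : Cube n × Cube n × Cube n => P p.1 p.2.1 p.2.2)).card
      = ∑ x : Cube n, ∑ y : Cube n, (Finset.univ.filter (fun z : Cube n => P x y z)).card := by
  rw [Finset.card_filter, Fintype.sum_prod_type]
  refine Finset.sum_congr rfl fun x _ => ?_
  rw [Fintype.sum_prod_type]
  exact Finset.sum_congr rfl fun y _ => (Finset.card_filter _ _).symm

lemma card_triple' (P : Cube n → Cube n → Cube n → Prop) [∀ x y z, Decidable (P x y z)] :
    (Finset.univ.filter (fun p : Cube n × Cube n × Cube n => P p.1 p.2.1 p.2.2)).card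
      = ∑ y : Cube n, ∑ z : Cube n, (Finset.univ.filter (fun x : Cube n => P x y z)).card := by
  rw [Finset.card_filter, Fintype.sum_prod_type]
  have h1 : ∀ x : Cube n, ∑ p : Cube n × Cube n, (if P x (x, p).2.1 (x, p).2.2 then 1 else 0)
      = ∑ y : Cube n, ∑ z : Cube n, (if P x y z then 1 else 0) := fun x =>
    Fintype.sum_prod_type _
  rw [Finset.sum_congr rfl fun x _ => h1 x, Finset.sum_comm]
  refine Finset.sum_congr rfl fun y _ => ?_
  rw [Finset.sum_comm]
  exact Finset.sum_congr rfl fun z _ => (Finset.card_filter _ _).symm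


end PF3Aux

open PF3Aux

/-- If `E[f] ≤ 2^{-500000}`, `E[g] ≤ 1/2` and `E[h] ≤ 1/2`, then `P(F) > 1/10`. -/
theorem PF3_gt_of_small_expectations (n : ℕ) (f g h : Cube n → Bool)
    (hf : cExp n (BR n f) ≤ (2 : ℝ) ^ (-(500000 : ℤ)))
    (hg : cExp n (BR n g) ≤ 1 / 2) (hh : cExp n (BR n h) ≤ 1 / 2) :
    PF3 n f g h > 1 / 10 := by
  have h2n : (0:ℝ) < 2^n := by positivity
  have h6n : (0:ℝ) < 6^n := by positivity
  set ε : ℝ := (2:ℝ)^(-(500000:ℤ)) with hεdef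
  have hε16 : ε ≤ 1/16 := by
    rw [hεdef]
    have h1 : (2:ℝ)^(-(500000:ℤ)) = ((2:ℝ)^(500000:ℕ))⁻¹ := by
      rw [zpow_neg]
      norm_num
    rw [h1]
    have h2 : (16:ℝ) ≤ 2^(500000:ℕ) := by
      calc (16:ℝ) = 2^(4:ℕ) := by norm_num
        _ ≤ 2^(500000:ℕ) := pow_le_pow_right₀ (by norm_num) (by norm_num)
    rw [one_div]
    exact inv_anti₀ (by norm_num) h2
  -- cardinalities of boolean-level sets
  set Fs : Finset (Cube n) := Finset.univ.filter (fun x => f x = true) with hFs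
  set A : Finset (Cube n) := Finset.univ.filter (fun y => g y = false) with hA
  set B : Finset (Cube n) := Finset.univ.filter (fun z => h z = false) with hB
  have hsum_f : ∑ x : Cube n, BR n f x = (Fs.card : ℝ) := by
    rw [hFs]
    simp [BR, Finset.sum_boole]
  have hFcard : (Fs.card : ℝ) ≤ ε * 2^n := by
    have h1 : cExp n (BR n f) = (Fs.card : ℝ) / 2^n := by rw [cExp, hsum_f]
    rw [h1, div_le_iff₀ h2n] at hf
    exact hf
  have hAB : ∀ (b : Cube n → Bool), cExp n (BR n b) ≤ 1/2 →
      (2:ℝ)^n ≤ 2 * (Finset.univ.filter (fun y => b y = false)).card := by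
    intro b hb
    have hsum_b : ∑ x : Cube n, BR n b x
        = ((Finset.univ.filter (fun y => b y = true)).card : ℝ) := by
      simp [BR, Finset.sum_boole]
    have h1 : ((Finset.univ.filter (fun y => b y = true)).card : ℝ) / 2^n ≤ 1/2 := by
      rw [cExp, hsum_b] at hb; exact hb
    have h2 : ((Finset.univ.filter (fun y => b y = true)).card : ℝ) ≤ 2^n / 2 := by
      rw [div_le_iff₀ h2n] at h1; linarith
    have h3 : (Finset.univ.filter (fun y => b y = true)).card
        + (Finset.univ.filter (fun y => b y = false)).card = 2^n := by
      have h4 := Finset.card_filter_add_card_filter_not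
        (s := (Finset.univ : Finset (Cube n))) (p := fun y => b y = true)
      rw [card_cube] at h4
      have h5 : (Finset.univ.filter (fun y => ¬ (b y = true)))
          = Finset.univ.filter (fun y => b y = false) :=
        Finset.filter_congr fun y _ => by simp
      rw [h5] at h4
      exact h4
    have h6 : ((Finset.univ.filter (fun y => b y = false)).card : ℝ)
        = 2^n - (Finset.univ.filter (fun y => b y = true)).card := by
      have := congrArg (fun m : ℕ => (m : ℝ)) h3
      push_cast at this
      linarith
    rw [h6]
    linarith
  have hAcard : (2:ℝ)^n ≤ 2 * A.card := by rw [hA]; exact hAB g hg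
  have hBcard : (2:ℝ)^n ≤ 2 * B.card := by rw [hB]; exact hAB h hh
  -- the sets of profiles
  set bigP : Cube n × Cube n × Cube n → Prop :=
    fun p => Profile3Ok n p.1 p.2.1 p.2.2 ∧ f p.1 = g p.2.1 ∧ g p.2.1 = h p.2.2 with hbigP
  set P0 : Cube n → Cube n → Cube n → Prop :=
    fun x y z => Profile3Ok n x y z ∧ f x = false ∧ g y = false ∧ h z = false with hP0
  set Pf : Cube n → Cube n → Cube n → Prop :=
    fun x y z => Profile3Ok n x y z ∧ f x = true with hPf
  have hNat : (Nat.card {p : Cube n × Cube n × Cube n //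
      Profile3Ok n p.1 p.2.1 p.2.2 ∧ f p.1 = g p.2.1 ∧ g p.2.1 = h p.2.2} : ℕ)
      = (Finset.univ.filter bigP).card := by
    rw [Nat.card_eq_fintype_card]
    exact Fintype.card_subtype _
  -- step A : monotonicity
  have hstepA : (Finset.univ.filter (fun p : Cube n × Cube n × Cube n => P0 p.1 p.2.1 p.2.2)).card
      ≤ (Finset.univ.filter bigP).card := by
    refine Finset.card_le_card ?_
    intro p hp
    rw [Finset.mem_filter] at hp ⊢
    obtain ⟨hmem, hok, hf0, hg0, hh0⟩ := hp
    exact ⟨hmem, hok, by rw [hf0, hg0], by rw [hg0, hh0]⟩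
  -- step B : fiber decomposition and restriction to A × B
  have hstepB : ∑ y ∈ A, ∑ z ∈ B, (Finset.univ.filter (fun x => P0 x y z)).card
      ≤ (Finset.univ.filter (fun p : Cube n × Cube n × Cube n => P0 p.1 p.2.1 p.2.2)).card := by
    rw [card_triple' P0]
    calc ∑ y ∈ A, ∑ z ∈ B, (Finset.univ.filter (fun x => P0 x y z)).card
        ≤ ∑ y ∈ A, ∑ z : Cube n, (Finset.univ.filter (fun x => P0 x y z)).card :=
          Finset.sum_le_sum fun y _ => Finset.sum_le_sum_of_subset (Finset.subset_univ B)
      _ ≤ ∑ y : Cube n, ∑ z : Cube n, (Finset.univ.filter (fun x => P0 x y z)).card :=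
          Finset.sum_le_sum_of_subset (Finset.subset_univ A)
  -- step C : pointwise identity on A × B
  have hstepC : ∀ y ∈ A, ∀ z ∈ B,
      ((Finset.univ.filter (fun x => P0 x y z)).card : ℝ)
        = ∏ i, cc (y i) (z i) - ((Finset.univ.filter (fun x => Pf x y z)).card : ℝ) := by
    intro y hy z hz
    have hgy : g y = false := by
      have hy' := hy; rw [hA] at hy'; exact (Finset.mem_filter.mp hy').2
    have hhz : h z = false := by
      have hz' := hz; rw [hB] at hz'; exact (Finset.mem_filter.mp hz').2
    have h1 : Finset.univ.filter (fun x => P0 x y z)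
        = Finset.univ.filter (fun x => Profile3Ok n x y z ∧ f x = false) :=
      Finset.filter_congr fun x _ => by simp [hP0, hgy, hhz]
    have h2 : ((Finset.univ.filter (fun x : Cube n => Profile3Ok n x y z)).filter
          (fun x => f x = false)).card
        + ((Finset.univ.filter (fun x : Cube n => Profile3Ok n x y z)).filter
          (fun x => ¬ (f x = false))).card
        = (Finset.univ.filter (fun x : Cube n => Profile3Ok n x y z)).card :=
      Finset.card_filter_add_card_filter_not _
    rw [Finset.filter_filter, Finset.filter_filter] at h2
    have h3 : (Finset.univ.filter (fun x : Cube n => Profile3Ok n x y z ∧ ¬ (f x = false)))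
        = Finset.univ.filter (fun x => Pf x y z) :=
      Finset.filter_congr fun x _ => by simp [hPf]
    rw [h3] at h2
    have h4 := congrArg (fun m : ℕ => (m : ℝ)) h2
    push_cast at h4
    rw [h1]
    rw [← cnt_x y z]
    linarith
  -- step D : the error term
  have hstepD : ∑ y : Cube n, ∑ z : Cube n,
      ((Finset.univ.filter (fun x => Pf x y z)).card : ℝ) ≤ ε * 6^n := by
    have h1 : ∑ y : Cube n, ∑ z : Cube n, ((Finset.univ.filter (fun x => Pf x y z)).card : ℝ)
        = ∑ x : Cube n, ∑ y : Cube n, ((Finset.univ.filter (fun z => Pf x y z)).card : ℝ) := by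
      have := card_triple' Pf
      rw [card_triple Pf] at this
      exact_mod_cast congrArg (fun m : ℕ => (m : ℝ)) this.symm
    rw [h1]
    have h2 : ∀ x : Cube n, ∑ y : Cube n, ((Finset.univ.filter (fun z => Pf x y z)).card : ℝ)
        = if f x = true then (3:ℝ)^n else 0 := by
      intro x
      by_cases hfx : f x = true
      · rw [if_pos hfx]
        have h3 : ∀ y : Cube n, (Finset.univ.filter (fun z => Pf x y z))
            = Finset.univ.filter (fun z => Profile3Ok n x y z) := fun y =>
          Finset.filter_congr fun z _ => by simp [hPf, hfx]
        calc ∑ y : Cube n, ((Finset.univ.filter (fun z => Pf x y z)).card : ℝ)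
            = ∑ y : Cube n, ((Finset.univ.filter (fun z => Profile3Ok n x y z)).card : ℝ) := by
              refine Finset.sum_congr rfl fun y _ => ?_; rw [h3 y]
          _ = ∑ y : Cube n, ∏ i, cc (x i) (y i) :=
              Finset.sum_congr rfl fun y _ => cnt_z x y
          _ = (3:ℝ)^n := sum_cc_row x
      · rw [if_neg hfx]
        refine Finset.sum_eq_zero fun y _ => ?_
        have h4 : Finset.univ.filter (fun z => Pf x y z) = (∅ : Finset (Cube n)) := by
          refine Finset.filter_false_of_mem fun z _ => ?_
          simp only [hPf]
          tauto
        rw [h4]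
        simp
    rw [Finset.sum_congr rfl fun x _ => h2 x]
    rw [← Finset.sum_filter]
    rw [Finset.sum_const, nsmul_eq_mul]
    have h5 : (2:ℝ)^n * 3^n = 6^n := by rw [← mul_pow]; norm_num
    calc (((Finset.univ.filter (fun x => f x = true)).card : ℕ) : ℝ) * (3:ℝ)^n
        ≤ (ε * 2^n) * 3^n := by
          refine mul_le_mul_of_nonneg_right ?_ (by positivity)
          rw [← hFs]; exact hFcard
      _ = ε * 6^n := by rw [mul_assoc, h5]
  -- combine steps B, C, D in ℝ
  have hmain : (6:ℝ)^n/6 - ε * 6^n ≤ ((Finset.univ.filter bigP).card : ℝ) := by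
    have hBC : ∑ y ∈ A, ∑ z ∈ B, ((Finset.univ.filter (fun x => P0 x y z)).card : ℝ)
        = (∑ y ∈ A, ∑ z ∈ B, ∏ i, cc (y i) (z i))
          - ∑ y ∈ A, ∑ z ∈ B, ((Finset.univ.filter (fun x => Pf x y z)).card : ℝ) := by
      rw [← Finset.sum_sub_distrib]
      refine Finset.sum_congr rfl fun y hy => ?_
      rw [← Finset.sum_sub_distrib]
      exact Finset.sum_congr rfl fun z hz => hstepC y hy z hz
    have herr : ∑ y ∈ A, ∑ z ∈ B, ((Finset.univ.filter (fun x => Pf x y z)).card : ℝ)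
        ≤ ∑ y : Cube n, ∑ z : Cube n, ((Finset.univ.filter (fun x => Pf x y z)).card : ℝ) := by
      calc ∑ y ∈ A, ∑ z ∈ B, ((Finset.univ.filter (fun x => Pf x y z)).card : ℝ)
          ≤ ∑ y ∈ A, ∑ z : Cube n, ((Finset.univ.filter (fun x => Pf x y z)).card : ℝ) :=
            Finset.sum_le_sum fun y _ => Finset.sum_le_sum_of_subset_of_nonneg
              (Finset.subset_univ B) (fun _ _ _ => Nat.cast_nonneg _)
        _ ≤ ∑ y : Cube n, ∑ z : Cube n, ((Finset.univ.filter (fun x => Pf x y z)).card : ℝ) :=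
            Finset.sum_le_sum_of_subset_of_nonneg (Finset.subset_univ A)
              (fun _ _ _ => Finset.sum_nonneg fun _ _ => Nat.cast_nonneg _)
    have hkey := key A B hAcard hBcard
    have hcast : ∑ y ∈ A, ∑ z ∈ B, ((Finset.univ.filter (fun x => P0 x y z)).card : ℝ)
        ≤ ((Finset.univ.filter bigP).card : ℝ) := by
      have h7 : ∑ y ∈ A, ∑ z ∈ B, ((Finset.univ.filter (fun x => P0 x y z)).card : ℝ)
          = ((∑ y ∈ A, ∑ z ∈ B, (Finset.univ.filter (fun x => P0 x y z)).card : ℕ) : ℝ) := by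
        push_cast; rfl
      rw [h7]
      exact_mod_cast le_trans hstepB hstepA
    calc (6:ℝ)^n/6 - ε * 6^n
        ≤ (∑ y ∈ A, ∑ z ∈ B, ∏ i, cc (y i) (z i))
            - ∑ y ∈ A, ∑ z ∈ B, ((Finset.univ.filter (fun x => Pf x y z)).card : ℝ) := by
          have h8 := le_trans herr hstepD
          exact sub_le_sub hkey h8
      _ = ∑ y ∈ A, ∑ z ∈ B, ((Finset.univ.filter (fun x => P0 x y z)).card : ℝ) := hBC.symm
      _ ≤ ((Finset.univ.filter bigP).card : ℝ) := hcast
  -- conclude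
  simp only [PF3, gt_iff_lt]
  rw [hNat]
  rw [lt_div_iff₀ h6n]
  nlinarith [hmain, hε16, h6n]

end
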